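/- Given a left recollement of a triangulated category T in terms of T' and T'' (functors i^* ⊣ i_* : T' → T fully faithful, j_! ⊣ j^* with j_! fully faithful, j^* i_* = 0, and for each X a triangle j_! j^* X → X → i_* i^* X → j_! j^* X[1]), which restricts to a left recollement of a triangulated subcategory S ⊆ T in terms of S' ⊆ T' and S'' ⊆ T'', the induced functors on Verdier quotients form a left recollement of T/S in terms of T'/S' and T''/S''. -/

import Mathlib

open CategoryTheory Limits Pretriangulated

universe w v u

namespace Paper

section Summands

variable {C : Type*} {D : Type*} [Category C] [Category D]

/-- Every object of the target is a direct summand (retract) of an object in the image. -/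
def DenseUpToSummands (F : C ⥤ D) : Prop :=
  ∀ X : D, ∃ (A : C) (s : X ⟶ F.obj A) (r : F.obj A ⟶ X), s ≫ r = 𝟙 X

/-- A functor is an equivalence up to direct summands if it is fully faithful and
every object of the target is a direct summand of an object in its image. -/
structure IsEquivalenceUpToSummands (F : C ⥤ D) : Prop where
  full : F.Full
  faithful : F.Faithful
  dense : DenseUpToSummands F

end Summands

section LeftRec

variable {T' T T'' : Type*} [Category T'] [Category T'']
  [Category T] [HasZeroObject T] [HasShift T ℤ] [Preadditive T]
  [∀ n : ℤ, (shiftFunctor T n).Additive] [Pretriangulated T]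

/-- The four functors `(i^*, i_*, j_!, j^*)` form a left recollement of `T` in terms of
`T'` and `T''`: `(i^*, i_*)` and `(j_!, j^*)` are adjoint pairs, `i_*` and `j_!` are fully
faithful, `j^* ∘ i_* = 0`, and for every `X` there is a distinguished triangle
`j_! j^* X → X → i_* i^* X → (j_! j^* X)[1]` whose first two maps are the counit and the
unit. -/
def IsLeftRecollement (iStar : T ⥤ T') (iS : T' ⥤ T)
    (jShriek : T'' ⥤ T) (jStar : T ⥤ T'') : Prop :=
  ∃ (a : iStar ⊣ iS) (b : jShriek ⊣ jStar),
    iS.Full ∧ iS.Faithful ∧ jShriek.Full ∧ jShriek.Faithful ∧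
    (∀ X : T', IsZero (jStar.obj (iS.obj X))) ∧
    (∀ X : T, ∃ h : iS.obj (iStar.obj X) ⟶ (jShriek.obj (jStar.obj X))⟦(1 : ℤ)⟧,
      Triangle.mk (b.counit.app X) (a.unit.app X) h ∈ distTriang T)

end LeftRec


lemma isIso_app_of_essSurj {C D E : Type*} [Category C] [Category D] [Category E]
    (L : C ⥤ D) [L.EssSurj] {F G : D ⥤ E} (τ : F ⟶ G)
    (h : ∀ X : C, IsIso (τ.app (L.obj X))) (Y : D) : IsIso (τ.app Y) := by
  have e : L.obj (L.objPreimage Y) ≅ Y := L.objObjPreimageIso Y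
  have : τ.app Y = F.map e.inv ≫ τ.app (L.obj (L.objPreimage Y)) ≫ G.map e.hom := by
    rw [← τ.naturality e.hom, ← Category.assoc, ← F.map_comp, e.inv_hom_id, F.map_id,
      Category.id_comp]
  rw [this]
  have := h (L.objPreimage Y)
  infer_instance

/-- A left recollement of `T` in terms of `T'` and `T''` which restricts
to a left recollement of a triangulated subcategory `S ⊆ T` in terms of `S' ⊆ T'` and
`S'' ⊆ T''` induces a left recollement of `T/S` in terms of `T'/S'` and `T''/S''`. -/
theorem statement3
    {T' T T'' : Type u}
    [Category.{v} T'] [HasZeroObject T'] [HasShift T' ℤ] [Preadditive T']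
    [∀ n : ℤ, (shiftFunctor T' n).Additive] [Pretriangulated T'] [IsTriangulated T']
    [Category.{v} T] [HasZeroObject T] [HasShift T ℤ] [Preadditive T]
    [∀ n : ℤ, (shiftFunctor T n).Additive] [Pretriangulated T] [IsTriangulated T]
    [Category.{v} T''] [HasZeroObject T''] [HasShift T'' ℤ] [Preadditive T'']
    [∀ n : ℤ, (shiftFunctor T'' n).Additive] [Pretriangulated T''] [IsTriangulated T'']
    (iStar : T ⥤ T') [iStar.CommShift ℤ] [iStar.IsTriangulated]
    (iS : T' ⥤ T) [iS.CommShift ℤ] [iS.IsTriangulated]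
    (jShriek : T'' ⥤ T) [jShriek.CommShift ℤ] [jShriek.IsTriangulated]
    (jStar : T ⥤ T'') [jStar.CommShift ℤ] [jStar.IsTriangulated]
    (hrec : IsLeftRecollement iStar iS jShriek jStar)
    (S' : ObjectProperty T') [S'.IsTriangulated] (S : ObjectProperty T) [S.IsTriangulated]
    (S'' : ObjectProperty T'') [S''.IsTriangulated]
    -- the left recollement restricts to the subcategories
    (hiS : ∀ X : T', S' X → S (iS.obj X))
    (hiStar : ∀ X : T, S X → S' (iStar.obj X))
    (hjShriek : ∀ X : T'', S'' X → S (jShriek.obj X))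
    (hjStar : ∀ X : T, S X → S'' (jStar.obj X))
    -- induced functors between the Verdier quotients
    (iStarBar : S.trW.Localization ⥤ S'.trW.Localization)
    (_ : S.trW.Q ⋙ iStarBar ≅ iStar ⋙ S'.trW.Q)
    (iSBar : S'.trW.Localization ⥤ S.trW.Localization)
    (_ : S'.trW.Q ⋙ iSBar ≅ iS ⋙ S.trW.Q)
    (jShriekBar : S''.trW.Localization ⥤ S.trW.Localization)
    (_ : S''.trW.Q ⋙ jShriekBar ≅ jShriek ⋙ S.trW.Q)
    (jStarBar : S.trW.Localization ⥤ S''.trW.Localization)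
    (_ : S.trW.Q ⋙ jStarBar ≅ jStar ⋙ S''.trW.Q) :
    IsLeftRecollement iStarBar iSBar jShriekBar jStarBar := by
  rename_i e1 e2 e3 e4
  obtain ⟨a, b, hf1, hf2, hf3, hf4, hzero, htri⟩ := hrec
  haveI := hf1; haveI := hf2; haveI := hf3; haveI := hf4
  haveI := Localization.essSurj S.trW.Q S.trW
  haveI := Localization.essSurj S'.trW.Q S'.trW
  haveI := Localization.essSurj S''.trW.Q S''.trW
  letI sq1 : CatCommSq iStar S.trW.Q S'.trW.Q iStarBar := ⟨e1.symm⟩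
  letI sq2 : CatCommSq iS S'.trW.Q S.trW.Q iSBar := ⟨e2.symm⟩
  letI sq3 : CatCommSq jShriek S''.trW.Q S.trW.Q jShriekBar := ⟨e3.symm⟩
  letI sq4 : CatCommSq jStar S.trW.Q S''.trW.Q jStarBar := ⟨e4.symm⟩
  let a' : iStarBar ⊣ iSBar := a.localization S.trW.Q S.trW S'.trW.Q S'.trW iStarBar iSBar
  let b' : jShriekBar ⊣ jStarBar := b.localization S''.trW.Q S''.trW S.trW.Q S.trW jShriekBar jStarBar
  -- fully faithfulness of iSBar
  have hcounit : IsIso a'.counit := by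
    haveI : ∀ Y, IsIso (a'.counit.app Y) := by
      intro Y
      apply isIso_app_of_essSurj S'.trW.Q
      intro X
      rw [a.localization_counit_app S.trW.Q S.trW S'.trW.Q S'.trW iStarBar iSBar]
      infer_instance
    exact NatIso.isIso_of_isIso_app _
  have hunit : IsIso b'.unit := by
    haveI : ∀ Y, IsIso (b'.unit.app Y) := by
      intro Y
      apply isIso_app_of_essSurj S''.trW.Q
      intro X
      rw [b.localization_unit_app S''.trW.Q S''.trW S.trW.Q S.trW jShriekBar jStarBar]
      infer_instance
    exact NatIso.isIso_of_isIso_app _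
  have ffIS : iSBar.FullyFaithful := a'.fullyFaithfulROfIsIsoCounit
  have ffJS : jShriekBar.FullyFaithful := b'.fullyFaithfulLOfIsIsoUnit
  refine ⟨a', b', ffIS.full, ffIS.faithful, ffJS.full, ffJS.faithful, ?_, ?_⟩
  · intro X
    have e : S'.trW.Q.obj (S'.trW.Q.objPreimage X) ≅ X := S'.trW.Q.objObjPreimageIso X
    set Y := S'.trW.Q.objPreimage X with hY
    refine IsZero.of_iso ?_
      (jStarBar.mapIso ((iSBar.mapIso e.symm) ≪≫ e2.app Y) ≪≫ e4.app (iS.obj Y))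
    exact (S''.trW.Q.map_isZero (hzero Y))
  · intro X
    have e : S.trW.Q.obj (S.trW.Q.objPreimage X) ≅ X := S.trW.Q.objObjPreimageIso X
    set Y := S.trW.Q.objPreimage X with hY
    obtain ⟨h, hT⟩ := htri Y
    have ha' : a' = a.localization S.trW.Q S.trW S'.trW.Q S'.trW iStarBar iSBar := rfl
    have hb' : b' = b.localization S''.trW.Q S''.trW S.trW.Q S.trW jShriekBar jStarBar := rfl
    have hQ := S.trW.Q.map_distinguished _ hT
    -- isomorphisms of the three vertices
    let α : jShriekBar.obj (jStarBar.obj X) ≅ S.trW.Q.obj (jShriek.obj (jStar.obj Y)) :=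
      jShriekBar.mapIso (jStarBar.mapIso e.symm ≪≫ e4.app Y) ≪≫ e3.app (jStar.obj Y)
    let γ : iSBar.obj (iStarBar.obj X) ≅ S.trW.Q.obj (iS.obj (iStar.obj Y)) :=
      iSBar.mapIso (iStarBar.mapIso e.symm ≪≫ e1.app Y) ≪≫ e2.app (iStar.obj Y)
    let Tr := S.trW.Q.mapTriangle.obj (Triangle.mk (b.counit.app Y) (a.unit.app Y) h)
    refine ⟨γ.hom ≫ Tr.mor₃ ≫ ((shiftFunctor S.trW.Localization (1 : ℤ)).mapIso α).inv,
      isomorphic_distinguished _ hQ _ ?_⟩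
    refine Triangle.isoMk _ _ α e.symm γ ?_ ?_ ?_
    · -- α.hom ≫ Q.map (b.counit.app Y) = b'.counit.app X ≫ e.inv
      have nat := b'.counit.naturality e.inv
      dsimp only [Functor.comp_map, Functor.id_map] at nat
      show b'.counit.app X ≫ e.inv = α.hom ≫ S.trW.Q.map (b.counit.app Y)
      dsimp [Tr, α]
      rw [← nat, hb', b.localization_counit_app S''.trW.Q S''.trW S.trW.Q S.trW jShriekBar jStarBar]
      simp [CatCommSq.iso, sq3, sq4]
    · -- e.inv ≫ Q.map (a.unit.app Y) = a'.unit.app X ≫ γ.hom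
      have nat := a'.unit.naturality e.inv
      dsimp only [Functor.comp_map, Functor.id_map] at nat
      show a'.unit.app X ≫ γ.hom = e.inv ≫ S.trW.Q.map (a.unit.app Y)
      dsimp [Tr, γ]
      rw [Functor.map_comp]
      slice_lhs 1 2 => rw [← nat]
      rw [ha', a.localization_unit_app S.trW.Q S.trW S'.trW.Q S'.trW iStarBar iSBar]
      simp [CatCommSq.iso, sq1, sq2]
    · show (γ.hom ≫ (S.trW.Q.map h ≫ (S.trW.Q.commShiftIso (1 : ℤ)).hom.app (jShriek.obj (jStar.obj Y))) ≫ ((shiftFunctor S.trW.Localization (1 : ℤ)).mapIso α).inv) ≫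
          (shiftFunctor S.trW.Localization (1 : ℤ)).map α.hom = γ.hom ≫ (S.trW.Q.map h ≫ (S.trW.Q.commShiftIso (1 : ℤ)).hom.app (jShriek.obj (jStar.obj Y)))
      rw [show (shiftFunctor S.trW.Localization (1 : ℤ)).map α.hom =
          ((shiftFunctor S.trW.Localization (1 : ℤ)).mapIso α).hom from rfl,
        Category.assoc, Category.assoc, Iso.inv_hom_id, Category.comp_id]


end Paper
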